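/- Let A be a c.e. subset of ℕ. If D(A) is generated by a family (G_i)_{i∈ℕ} of pairwise disjoint c.e. sets, then D(A) is generated by a family (G'_i)_{i∈ℕ} of pairwise disjoint c.e. sets such that either (a) every G'_i is computable, or (b) every G'_i is noncomputable, or (c) exactly one G'_i is noncomputable and all the others are computable. -/

import Mathlib

open Set Function

/-- A set of naturals is computably enumerable (c.e.) -/
def CESet (A : Set ℕ) : Prop := REPred (· ∈ A)

/-- A set of naturals is computable -/
def ComputableSet (A : Set ℕ) : Prop := ComputablePred (· ∈ A)

/-- X ⊆* Y : X is almost contained in Y -/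
def SubsetStar (X Y : Set ℕ) : Prop := (X \ Y).Finite

/-- X =* Y : X and Y differ by a finite set -/
def EqStar (X Y : Set ℕ) : Prop := (X \ Y).Finite ∧ (Y \ X).Finite

/-- G is a generating set for 𝒟(A): a countable family of c.e. sets, each disjoint
from A, such that every c.e. set disjoint from A is almost covered by finitely many
members of G. -/
def Generates (A : Set ℕ) (G : Set (Set ℕ)) : Prop :=
  G.Countable ∧ (∀ X ∈ G, CESet X) ∧ (∀ X ∈ G, Disjoint X A) ∧
  ∀ D : Set ℕ, CESet D → Disjoint D A →
    ∃ F : Set (Set ℕ), F ⊆ G ∧ F.Finite ∧ SubsetStar D (⋃₀ F)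

/-- S is simple -/
def SimpleSet (S : Set ℕ) : Prop :=
  CESet S ∧ Sᶜ.Infinite ∧ ∀ W : Set ℕ, CESet W → Disjoint W S → W.Finite

/-- A is 𝒟-maximal -/
def DMaximal (A : Set ℕ) : Prop :=
  CESet A ∧ ∀ W : Set ℕ, CESet W → ∃ D : Set ℕ, CESet D ∧ Disjoint D A ∧
    (SubsetStar W (A ∪ D) ∨ EqStar (W ∪ A ∪ D) Set.univ)

/-- M is r-maximal -/
def RMaximal (M : Set ℕ) : Prop :=
  CESet M ∧ Mᶜ.Infinite ∧
    ∀ R : Set ℕ, ComputableSet R → (R ∩ Mᶜ).Finite ∨ (Rᶜ ∩ Mᶜ).Finite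

/-- M is maximal -/
def MaximalSet (M : Set ℕ) : Prop :=
  CESet M ∧ Mᶜ.Infinite ∧
    ∀ W : Set ℕ, CESet W → M ⊆ W → (W \ M).Finite ∨ Wᶜ.Finite

/-- B is atomless -/
def AtomlessSet (B : Set ℕ) : Prop :=
  ∀ C : Set ℕ, CESet C → B ⊆ C → Cᶜ.Infinite →
    ∃ E : Set ℕ, CESet E ∧ SubsetStar C E ∧ (E \ C).Infinite ∧ Eᶜ.Infinite

/-- A0, A1 form a Friedberg splitting of A -/
def FriedbergSplitting (A0 A1 A : Set ℕ) : Prop :=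
  CESet A0 ∧ CESet A1 ∧ Disjoint A0 A1 ∧ A0 ∪ A1 = A ∧
    ∀ W : Set ℕ, CESet W → ¬ CESet (W \ A) → ¬ CESet (W \ A0) ∧ ¬ CESet (W \ A1)

/-- E is a major subset of D -/
def MajorIn (E D : Set ℕ) : Prop :=
  CESet E ∧ CESet D ∧ E ⊆ D ∧ (D \ E).Infinite ∧
    ∀ W : Set ℕ, CESet W → SubsetStar Dᶜ W → SubsetStar Eᶜ W

/-- H is hh-simple: the lattice of c.e. supersets of H mod finite is a boolean algebra -/
def HHSimple (H : Set ℕ) : Prop :=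
  CESet H ∧ Hᶜ.Infinite ∧
    ∀ W : Set ℕ, CESet W → ∃ V : Set ℕ, CESet V ∧
      EqStar ((W ∪ H) ∩ (V ∪ H)) H ∧ EqStar (W ∪ V ∪ H) Set.univ

/-- A is strongly r-separable -/
def StronglyRSeparable (A : Set ℕ) : Prop :=
  ∀ B : Set ℕ, CESet B → Disjoint B A →
    ∃ C : Set ℕ, ComputableSet C ∧ B ⊆ C ∧ Disjoint C A ∧ (C \ B).Infinite

/-- Structure of a Type 5 generating family: D0 together with the R_i. -/
def Type5Family (D0 : Set ℕ) (R : ℕ → Set ℕ) : Prop :=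
  CESet D0 ∧ ¬ ComputableSet D0 ∧ D0.Infinite ∧
  Function.Injective R ∧ (∀ i, D0 ≠ R i) ∧
  (∀ i, ComputableSet (R i) ∧ (R i).Infinite) ∧
  Pairwise (Function.onFun Disjoint R) ∧
  (∀ i, Disjoint D0 (R i))

/-- Structure of a Type 7 generating family: D0 together with the R_i. -/
def Type7Family (D0 : Set ℕ) (R : ℕ → Set ℕ) : Prop :=
  CESet D0 ∧ ¬ ComputableSet D0 ∧
  Function.Injective R ∧ (∀ i, D0 ≠ R i) ∧
  (∀ i, ComputableSet (R i) ∧ (R i).Infinite) ∧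
  Pairwise (Function.onFun Disjoint R) ∧
  {i : ℕ | (D0 ∩ R i).Nonempty}.Infinite

/-- Structure of a Type 8 generating family: the D_i together with the R_i. -/
def Type8Family (D R : ℕ → Set ℕ) : Prop :=
  Function.Injective D ∧ Function.Injective R ∧ (∀ i j, D i ≠ R j) ∧
  (∀ i, CESet (D i) ∧ ¬ ComputableSet (D i)) ∧
  Pairwise (Function.onFun Disjoint D) ∧
  (∀ i, ComputableSet (R i) ∧ (R i).Infinite) ∧
  Pairwise (Function.onFun Disjoint R)

/-- Structure of a Type 9 generating family: the nested D_i together with the R_i. -/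
def Type9Family (D R : ℕ → Set ℕ) : Prop :=
  Function.Injective R ∧ (∀ i j, D i ≠ R j) ∧
  (∀ i, ComputableSet (R i) ∧ (R i).Infinite) ∧
  Pairwise (Function.onFun Disjoint R) ∧
  (∀ i, CESet (D i) ∧ ¬ ComputableSet (D i) ∧ (D i).Infinite) ∧
  (∀ l, D l ⊆ D (l + 1)) ∧
  (∀ l, ¬ CESet (D (l + 1) \ D l)) ∧
  (∀ l, {j : ℕ | (R j \ D l).Infinite}.Infinite)

def IsType1 (G : Set (Set ℕ)) : Prop := G = {∅}

def IsType2 (G : Set (Set ℕ)) : Prop :=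
  ∃ R : Set ℕ, G = {R} ∧ ComputableSet R ∧ R.Infinite

def IsType3 (G : Set (Set ℕ)) : Prop :=
  ∃ W : Set ℕ, G = {W} ∧ CESet W ∧ ¬ ComputableSet W ∧ W.Infinite

def IsType4 (G : Set (Set ℕ)) : Prop :=
  ∃ R : ℕ → Set ℕ, G = Set.range R ∧ Function.Injective R ∧
    (∀ i, ComputableSet (R i) ∧ (R i).Infinite) ∧
    Pairwise (Function.onFun Disjoint R)

def IsType5 (G : Set (Set ℕ)) : Prop :=
  ∃ (D0 : Set ℕ) (R : ℕ → Set ℕ), G = insert D0 (Set.range R) ∧ Type5Family D0 R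

def IsType6 (G : Set (Set ℕ)) : Prop :=
  ∃ D : ℕ → Set ℕ, G = Set.range D ∧ Function.Injective D ∧
    (∀ i, CESet (D i) ∧ ¬ ComputableSet (D i) ∧ (D i).Infinite) ∧
    Pairwise (Function.onFun Disjoint D)

def IsType7 (G : Set (Set ℕ)) : Prop :=
  ∃ (D0 : Set ℕ) (R : ℕ → Set ℕ), G = insert D0 (Set.range R) ∧ Type7Family D0 R

def IsType8 (G : Set (Set ℕ)) : Prop :=
  ∃ D R : ℕ → Set ℕ, G = Set.range D ∪ Set.range R ∧ Type8Family D R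

def IsType9 (G : Set (Set ℕ)) : Prop :=
  ∃ D R : ℕ → Set ℕ, G = Set.range D ∪ Set.range R ∧ Type9Family D R

def IsType10 (G : Set (Set ℕ)) : Prop :=
  ∃ D : ℕ → Set ℕ, G = Set.range D ∧
    (∀ i, CESet (D i) ∧ ¬ ComputableSet (D i) ∧ (D i).Infinite) ∧
    (∀ l, D l ⊆ D (l + 1)) ∧
    (∀ l, ¬ CESet (D (l + 1) \ D l))

/-- G is a generating set of Type n (n = 1, …, 10). -/
def GenTypeN (n : ℕ) (G : Set (Set ℕ)) : Prop :=
  match n with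
  | 1 => IsType1 G
  | 2 => IsType2 G
  | 3 => IsType3 G
  | 4 => IsType4 G
  | 5 => IsType5 G
  | 6 => IsType6 G
  | 7 => IsType7 G
  | 8 => IsType8 G
  | 9 => IsType9 G
  | 10 => IsType10 G
  | _ => False

/-- The c.e. set A is of Type n: 𝒟(A) has a generating set of Type n
but no generating set of any Type m < n. -/
def SetOfType (A : Set ℕ) (n : ℕ) : Prop :=
  (∃ G : Set (Set ℕ), Generates A G ∧ GenTypeN n G) ∧
  ∀ m : ℕ, m < n → ¬ ∃ G : Set (Set ℕ), Generates A G ∧ GenTypeN m G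

/-- (F_i) is an A-special list. -/
def ASpecialList (A : Set ℕ) (F : ℕ → Set ℕ) : Prop :=
  F 0 = A ∧ (∀ i, CESet (F i) ∧ ¬ ComputableSet (F i)) ∧
  Pairwise (Function.onFun Disjoint F) ∧
  ∀ W : Set ℕ, CESet W → ∃ i : ℕ,
    SubsetStar W (⋃ l ≤ i, F l) ∨ EqStar (W ∪ ⋃ l ≤ i, F l) Set.univ

lemma RePred.or' {p q : ℕ → Prop} (hp : REPred p) (hq : REPred q) :
    REPred fun a => p a ∨ q a := by
  obtain ⟨k, pk, hk⟩ := Partrec.merge' hp hq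
  refine pk.of_eq fun a => Part.ext' ?_ (fun _ _ => rfl)
  rw [(hk a).2]
  simp [Part.assert]

lemma CESet.union {X Y : Set ℕ} (hX : CESet X) (hY : CESet Y) : CESet (X ∪ Y) := by
  have := RePred.or' hX hY
  exact this.of_eq fun a => by simp [Set.mem_union]

lemma ComputableSet.empty : ComputableSet (∅ : Set ℕ) := by
  refine ComputablePred.computable_iff.2 ⟨fun _ => false, Computable.const _, ?_⟩
  simp

lemma CESet.empty : CESet (∅ : Set ℕ) := ComputableSet.empty.to_re

lemma ComputableSet.diff {X Y : Set ℕ} (hX : ComputableSet X) (hY : ComputableSet Y) :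
    ComputableSet (X \ Y) := by
  obtain ⟨f, hf, hpf⟩ := ComputablePred.computable_iff.1 hX
  obtain ⟨g, hg, hpg⟩ := ComputablePred.computable_iff.1 hY
  refine ComputablePred.computable_iff.2 ⟨fun a => f a && !(g a), ?_, ?_⟩
  · exact (hf.cond (Computable.cond hg (Computable.const false) (Computable.const true))
      (Computable.const false)).of_eq fun a => by cases h1 : f a <;> cases h2 : g a <;> simp [h1, h2]
  · funext a
    have h1 : (a ∈ X) = (f a : Prop) := congrFun hpf a
    have h2 : (a ∈ Y) = (g a : Prop) := congrFun hpg a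
    simp only [Set.mem_diff, h1, h2]
    cases f a <;> cases g a <;> simp

lemma CESet.biUnion (t : Finset ℕ) (G : ℕ → Set ℕ) (h : ∀ i ∈ t, CESet (G i)) :
    CESet (⋃ i ∈ t, G i) := by
  classical
  induction t using Finset.induction with
  | empty => simpa using CESet.empty
  | @insert a s hx ih =>
    rw [Finset.set_biUnion_insert]
    exact (h a (by simp)).union (ih fun i hi => h i (by simp [hi]))

lemma cover_lemma {F R : Set (Set ℕ)} (hF : F.Finite)
    (h : ∀ X ∈ F, ∃ Y ∈ R, X ⊆ Y) :
    ∃ F' : Set (Set ℕ), F' ⊆ R ∧ F'.Finite ∧ ⋃₀ F ⊆ ⋃₀ F' := by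
  classical
  choose! f hf1 hf2 using h
  refine ⟨f '' F, ?_, hF.image f, ?_⟩
  · rintro _ ⟨X, hX, rfl⟩; exact hf1 X hX
  · rintro x ⟨X, hX, hxX⟩
    exact ⟨f X, ⟨X, hX, rfl⟩, hf2 X hX hxX⟩

theorem stmt_2 (A : Set ℕ) (hA : CESet A) (G : ℕ → Set ℕ)
    (hce : ∀ i, CESet (G i)) (hdisj : Pairwise (Function.onFun Disjoint G))
    (hgen : Generates A (Set.range G)) :
    ∃ G' : ℕ → Set ℕ, (∀ i, CESet (G' i)) ∧
      Pairwise (Function.onFun Disjoint G') ∧ Generates A (Set.range G') ∧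
      ((∀ i, ComputableSet (G' i)) ∨ (∀ i, ¬ ComputableSet (G' i)) ∨
        (∃ i, ¬ ComputableSet (G' i) ∧ ∀ j, j ≠ i → ComputableSet (G' j))) := by
  classical
  have hGA : ∀ i, Disjoint (G i) A := fun i => hgen.2.2.1 _ ⟨i, rfl⟩
  have hdGG : ∀ i j, i ≠ j → Disjoint (G i) (G j) := fun i j h => hdisj h
  by_cases hfin : {i : ℕ | ¬ ComputableSet (G i)}.Finite
  · -- finitely many noncomputable members: merge them into G' 0
    set t : Finset ℕ := hfin.toFinset with ht
    set U : Set ℕ := ⋃ i ∈ t, G i with hU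
    have hq : {i : ℕ | ComputableSet (G i)}.Infinite :=
      hfin.infinite_compl.mono (fun i hi => not_not.1 hi)
    set e : ℕ → ℕ := Nat.nth (fun i => ComputableSet (G i)) with he
    have he_mem : ∀ k, ComputableSet (G (e k)) := fun k => Nat.nth_mem_of_infinite hq k
    have he_inj : Function.Injective e := Nat.nth_injective hq
    have he_surj : ∀ i, ComputableSet (G i) → ∃ k, e k = i := fun i hi =>
      Nat.subset_range_nth hi
    set G' : ℕ → Set ℕ := fun k => Nat.casesOn k U (fun k => G (e k)) with hG'
    have hceU : CESet U := CESet.biUnion t G (fun i _ => hce i)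
    have hUe : ∀ k, Disjoint U (G (e k)) := by
      intro k
      rw [Set.disjoint_left]
      intro x hx hx2
      obtain ⟨i, hi, hxi⟩ := Set.mem_iUnion₂.1 hx
      have hiS : ¬ ComputableSet (G i) := (Set.Finite.mem_toFinset hfin).1 hi
      have : i ≠ e k := fun h => hiS (h ▸ he_mem k)
      exact (hdGG i (e k) this).le_bot ⟨hxi, hx2⟩
    have hsub : ∀ i, i ∈ t → G i ⊆ U := fun i hi => Set.subset_biUnion_of_mem hi
    refine ⟨G', ?_, ?_, ⟨Set.countable_range _, ?_, ?_, ?_⟩, ?_⟩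
    · intro k; cases k with
      | zero => exact hceU
      | succ k => exact hce _
    · intro i j hij
      rcases i with _ | i <;> rcases j with _ | j
      · exact absurd rfl hij
      · exact hUe j
      · exact (hUe i).symm
      · exact hdGG _ _ fun h => hij (by rw [he_inj h])
    · rintro X ⟨k, rfl⟩
      cases k with
      | zero => exact hceU
      | succ k => exact hce _
    · rintro X ⟨k, rfl⟩
      cases k with
      | zero =>
        rw [Set.disjoint_left]
        intro x hx
        obtain ⟨i, _, hxi⟩ := Set.mem_iUnion₂.1 hx
        exact Set.disjoint_left.1 (hGA i) hxi
      | succ k => exact hGA _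
    · intro D hD hDA
      obtain ⟨F, hFG, hFfin, hFstar⟩ := hgen.2.2.2 D hD hDA
      have hcov : ∀ X ∈ F, ∃ Y ∈ Set.range G', X ⊆ Y := by
        intro X hX
        obtain ⟨i, rfl⟩ := hFG hX
        by_cases hi : ComputableSet (G i)
        · obtain ⟨k, rfl⟩ := he_surj i hi
          exact ⟨G' (k + 1), ⟨k + 1, rfl⟩, le_refl _⟩
        · exact ⟨G' 0, ⟨0, rfl⟩, hsub i ((Set.Finite.mem_toFinset hfin).2 hi)⟩
      obtain ⟨F', hF'1, hF'2, hF'3⟩ := cover_lemma hFfin hcov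
      exact ⟨F', hF'1, hF'2, hFstar.subset (Set.diff_subset_diff_right hF'3)⟩
    · by_cases hUc : ComputableSet U
      · left
        intro k; cases k with
        | zero => exact hUc
        | succ k => exact he_mem k
      · right; right
        refine ⟨0, hUc, ?_⟩
        intro j hj
        cases j with
        | zero => exact absurd rfl hj
        | succ k => exact he_mem k
  · -- infinitely many noncomputable members
    have hinf : {i : ℕ | ¬ ComputableSet (G i)}.Infinite := hfin
    set d : ℕ → ℕ := Nat.nth (fun i => ¬ ComputableSet (G i)) with hd
    have hd_mem : ∀ k, ¬ ComputableSet (G (d k)) := fun k => Nat.nth_mem_of_infinite hinf k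
    have hd_inj : Function.Injective d := Nat.nth_injective hinf
    have hd_surj : ∀ i, ¬ ComputableSet (G i) → ∃ k, d k = i := fun i hi =>
      Nat.subset_range_nth hi
    set R : ℕ → Set ℕ := fun k => if ComputableSet (G k) then G k else ∅ with hR
    set G' : ℕ → Set ℕ := fun k => G (d k) ∪ R k with hG'
    have hG'eq : ∀ k, G' k = G (d k) ∪ R k := fun _ => rfl
    have hRpos : ∀ k, ComputableSet (G k) → R k = G k := fun k h => if_pos h
    have hRneg : ∀ k, ¬ ComputableSet (G k) → R k = ∅ := fun k h => if_neg h
    have hRsub : ∀ k, R k ⊆ G k := by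
      intro k; by_cases h : ComputableSet (G k)
      · rw [hRpos k h]
      · rw [hRneg k h]; exact Set.empty_subset _
    have hceR : ∀ k, CESet (R k) := by
      intro k; by_cases h : ComputableSet (G k)
      · rw [hRpos k h]; exact hce k
      · rw [hRneg k h]; exact CESet.empty
    have hdR : ∀ i j, Disjoint (G (d i)) (R j) := by
      intro i j
      by_cases h : ComputableSet (G j)
      · rw [hRpos j h]
        exact hdGG _ _ fun e => hd_mem i (e ▸ h)
      · rw [hRneg j h]; exact disjoint_bot_right
    refine ⟨G', ?_, ?_, ⟨Set.countable_range _, ?_, ?_, ?_⟩, ?_⟩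
    · intro k
      rw [hG'eq k]
      exact (hce (d k)).union (hceR k)
    · intro i j hij
      have : Disjoint (G' i) (G' j) := by
        rw [hG'eq i, hG'eq j]
        rw [Set.disjoint_union_left, Set.disjoint_union_right, Set.disjoint_union_right]
        exact ⟨⟨hdGG _ _ fun h => hij (hd_inj h), hdR i j⟩,
          ⟨(hdR j i).symm, ((hdGG i j hij).mono (hRsub i) (hRsub j))⟩⟩
      exact this
    · rintro X ⟨k, rfl⟩
      rw [hG'eq k]
      exact (hce (d k)).union (hceR k)
    · rintro X ⟨k, rfl⟩
      rw [hG'eq k]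
      exact Set.disjoint_union_left.2 ⟨hGA _, ((hGA k).mono_left (hRsub k))⟩
    · intro D hD hDA
      obtain ⟨F, hFG, hFfin, hFstar⟩ := hgen.2.2.2 D hD hDA
      have hcov : ∀ X ∈ F, ∃ Y ∈ Set.range G', X ⊆ Y := by
        intro X hX
        obtain ⟨i, rfl⟩ := hFG hX
        by_cases hi : ComputableSet (G i)
        · refine ⟨G' i, ⟨i, rfl⟩, ?_⟩
          rw [hG'eq i, hRpos i hi]
          exact Set.subset_union_right
        · obtain ⟨k, rfl⟩ := hd_surj i hi
          refine ⟨G' k, ⟨k, rfl⟩, ?_⟩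
          rw [hG'eq k]
          exact Set.subset_union_left
      obtain ⟨F', hF'1, hF'2, hF'3⟩ := cover_lemma hFfin hcov
      exact ⟨F', hF'1, hF'2, hFstar.subset (Set.diff_subset_diff_right hF'3)⟩
    · right; left
      intro k hk
      by_cases h : ComputableSet (G k)
      · have hdd : Disjoint (G (d k)) (G k) := (hRpos k h) ▸ hdR k k
        have heq : G' k \ G k = G (d k) := by
          rw [hG'eq k, hRpos k h, Set.union_diff_right, hdd.sdiff_eq_left]
        exact hd_mem k (heq ▸ hk.diff h)
      · have heq : G' k = G (d k) := by
          rw [hG'eq k, hRneg k h, Set.union_empty]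
        exact hd_mem k (heq ▸ hk)
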